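/- arXiv:0808.0108 — 5 statements merged into one kernel-verified Lean document; each statement's English description precedes it below -/
import Mathlib

section
/- Let Q be a rack and A a commutative ring with ideal m. For f : Q^n × Q^n → A, define the partial coboundaries d_i^n f : Q^{n+1} × Q^{n+1} → A (for 0 ≤ i ≤ n) by (d_i^n f)[(x_0,...,x_n),(y_0,...,y_n)] = f[(x_0,...,x_{i-1},x_{i+1},...,x_n),(y_0,...,y_{i-1},y_{i+1},...,y_n)]·δ(x_i^{x_{i+1}⋯x_n}, y_i^{y_{i+1}⋯y_n}) − f[(x_0^{x_i},...,x_{i-1}^{x_i},x_{i+1},...,x_n),(y_0^{y_i},...,y_{i-1}^{y_i},y_{i+1},...,y_n)]·δ(x_i, y_i), where δ is the Kronecker delta. Then for i ≤ j one has d_i^{n+1} ∘ d_j^n = d_{j+1}^{n+1} ∘ d_i^n. -/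
open scoped Classical

variable {Q : Type*}

/-- A rack: every right translation is a bijection, and self-distributivity holds. -/
def IsRack (op : Q → Q → Q) : Prop :=
  (∀ y : Q, Function.Bijective fun x => op x y) ∧
    ∀ a b c : Q, op (op a b) c = op (op a c) (op b c)

/-- Behavioural equivalence: `x ≡ y` iff `a ∗ x = a ∗ y` for all `a`. -/
def behEq (op : Q → Q → Q) (x y : Q) : Prop := ∀ a : Q, op a x = op a y

noncomputable section

variable {A : Type*} [CommRing A]

/-- The iterated action `x_i ^ (x_{i+1} ⋯ x_n)`. -/
def opChain (op : Q → Q → Q) {n : ℕ} (x : Fin (n + 1) → Q) (i : Fin (n + 1)) : Q :=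
  ((List.finRange (n + 1)).filter fun j => i < j).foldl (fun a j => op a (x j)) (x i)

/-- The partial Yang-Baxter coboundary `d_i^n`. -/
def dpart (op : Q → Q → Q) {n : ℕ} (i : Fin (n + 1))
    (f : (Fin n → Q) → (Fin n → Q) → A) :
    (Fin (n + 1) → Q) → (Fin (n + 1) → Q) → A := fun x y =>
  f (x ∘ i.succAbove) (y ∘ i.succAbove) *
      (if opChain op x i = opChain op y i then (1 : A) else 0) -
    f (fun j => if i.succAbove j < i then op (x (i.succAbove j)) (x i) else x (i.succAbove j))
      (fun j => if i.succAbove j < i then op (y (i.succAbove j)) (y i) else y (i.succAbove j)) *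
      (if x i = y i then (1 : A) else 0)

/-- The Yang-Baxter coboundary `d^n = Σ (-1)^i d_i^n`. -/
def dYB (op : Q → Q → Q) {n : ℕ} (f : (Fin n → Q) → (Fin n → Q) → A) :
    (Fin (n + 1) → Q) → (Fin (n + 1) → Q) → A := fun x y =>
  ∑ i : Fin (n + 1), (-1 : A) ^ (i : ℕ) * dpart op i f x y

end

section aux
variable {α : Type*} [LinearOrder α]

private lemma filter_split_le (p : α → Bool) (c : α) :
    ∀ (l : List α), l.Pairwise (· < ·) →
      l.filter p = (l.filter fun k => p k && decide (k ≤ c)) ++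
        (l.filter fun k => p k && decide (c < k))
  | [], _ => rfl
  | a :: t, hp => by
    have hmem := (List.pairwise_cons.1 hp).1
    have ht := (List.pairwise_cons.1 hp).2
    have IH := filter_split_le p c t ht
    by_cases hac : a ≤ c
    · by_cases hpa : p a = true
      · simp [List.filter_cons, hac, not_lt.2 hac, hpa, IH]
      · simp [List.filter_cons, hpa, IH]
    · push_neg at hac
      have h3 : ∀ k ∈ a :: t, c < k := by
        intro k hk
        rcases List.mem_cons.1 hk with rfl | hk
        · exact hac
        · exact hac.trans (hmem k hk)
      have h1 : ((a :: t).filter fun k => p k && decide (k ≤ c)) = [] := by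
        rw [List.filter_eq_nil_iff]; intro k hk; simp [not_le.2 (h3 k hk)]
      have h2 : ((a :: t).filter fun k => p k && decide (c < k)) = (a :: t).filter p := by
        apply List.filter_congr; intro k hk; simp [h3 k hk]
      rw [h1, h2, List.nil_append]

private lemma filter_split_pivot (p : α → Bool) (c : α) :
    ∀ (l : List α), l.Pairwise (· < ·) → c ∈ l → p c = true →
      l.filter p = (l.filter fun k => p k && decide (k < c)) ++
        c :: (l.filter fun k => p k && decide (c < k))
  | [], _, hc, _ => absurd hc (List.not_mem_nil (a := c))
  | a :: t, hp, hc, hpc => by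
    have hmem := (List.pairwise_cons.1 hp).1
    have ht := (List.pairwise_cons.1 hp).2
    by_cases hac : a = c
    · subst hac
      have h1 : ((a :: t).filter fun k => p k && decide (k < a)) = [] := by
        rw [List.filter_eq_nil_iff]; intro k hk
        rcases List.mem_cons.1 hk with rfl | hk
        · simp
        · simp [not_lt.2 (hmem k hk).le]
      have h2 : (t.filter fun k => p k && decide (a < k)) = t.filter p := by
        apply List.filter_congr; intro k hk; simp [hmem k hk]
      rw [h1, List.nil_append, List.filter_cons, List.filter_cons]
      simp [hpc, lt_irrefl, h2]
    · have hct : c ∈ t := (List.mem_cons.1 hc).resolve_left (fun h => hac h.symm)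
      have hacc : a < c := hmem c hct
      have IH := filter_split_pivot p c t ht hct hpc
      rw [List.filter_cons, List.filter_cons]
      by_cases hpa : p a = true
      · simp [List.filter_cons, hpa, hacc, not_lt.2 hacc.le, IH]
      · simp [hpa, IH]
end aux


section rackaux
variable {op : Q → Q → Q}

private lemma rack_inj (h : IsRack op) {a b c : Q} (hab : op a c = op b c) : a = b :=
  (h.1 c).1 hab

private lemma foldl_op_op (h : IsRack op) :
    ∀ (l : List Q) (a b : Q), l.foldl op (op a b) = op (l.foldl op a) (l.foldl op b)
  | [], a, b => rfl
  | c :: t, a, b => by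
    simp only [List.foldl_cons, h.2 a b c]
    exact foldl_op_op h t _ _

private lemma foldl_op_right (h : IsRack op) :
    ∀ (l : List Q) (a c : Q), (l.map (fun b => op b c)).foldl op (op a c) = op (l.foldl op a) c
  | [], a, c => rfl
  | b :: t, a, c => by
    simp only [List.map_cons, List.foldl_cons, ← h.2 a b c]
    exact foldl_op_right h t _ _
end rackaux

private lemma filt_succ {n : ℕ} (j : Fin (n+1)) :
    ((List.finRange (n+2)).filter fun k => j.succ < k) =
      ((List.finRange (n+1)).filter fun k => j < k).map Fin.succ := by
  rw [List.finRange_succ, List.filter_cons, List.filter_map]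
  simp [Function.comp_def, Fin.succ_lt_succ_iff]

private lemma filt_cast {n : ℕ} (i : Fin (n+1)) :
    ((List.finRange (n+2)).filter fun k => i.castSucc < k) =
      (((List.finRange (n+1)).filter fun k => i < k).map Fin.castSucc) ++ [Fin.last (n+1)] := by
  rw [List.finRange_succ_last, List.filter_append, List.filter_map]
  simp [Function.comp_def, Fin.castSucc_lt_castSucc_iff, Fin.castSucc_lt_last]


private lemma succAbove_comm {n : ℕ} (i j : Fin (n+1)) (hij : i ≤ j) (k : Fin n) :
    (i.castSucc).succAbove (j.succAbove k) = (j.succ).succAbove (i.succAbove k) := by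
  rcases lt_or_ge (k.castSucc) i with hki | hik
  · have hkj : k.castSucc < j := lt_of_lt_of_le hki hij
    rw [Fin.succAbove_of_castSucc_lt i k hki, Fin.succAbove_of_castSucc_lt j k hkj,
      Fin.succAbove_castSucc_of_lt _ _ hki, Fin.succAbove_succ_of_le _ _ (hki.le.trans hij)]
  · rcases lt_or_ge (k.castSucc) j with hkj | hjk
    · have hsk : k.succ ≤ j := Fin.castSucc_lt_iff_succ_le.1 hkj
      rw [Fin.succAbove_of_le_castSucc i k hik, Fin.succAbove_of_castSucc_lt j k hkj,
        Fin.succAbove_castSucc_of_le _ _ hik, Fin.succAbove_succ_of_le _ _ hsk,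
        Fin.succ_castSucc]
    · have hjk' : j ≤ k.castSucc := hjk
      rw [Fin.succAbove_of_le_castSucc i k (hij.trans hjk), Fin.succAbove_of_le_castSucc j k hjk,
        Fin.succAbove_succ_of_lt _ _ (lt_of_le_of_lt hjk (Fin.castSucc_lt_succ (i := k))),
        Fin.succAbove_of_le_castSucc]
      simp only [Fin.le_def, Fin.coe_castSucc, Fin.val_succ] at *
      omega


private lemma opChain_eq {n : ℕ} (op : Q → Q → Q) (x : Fin (n+1) → Q) (i : Fin (n+1)) :
    opChain op x i = (((List.finRange (n+1)).filter fun j => i < j).map x).foldl op (x i) := by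
  rw [opChain, List.foldl_map]

private lemma chain_a {n : ℕ} (op : Q → Q → Q) (i j : Fin (n+1)) (hij : i ≤ j)
    (x : Fin (n+2) → Q) :
    opChain op (x ∘ (i.castSucc).succAbove) j = opChain op x j.succ := by
  rw [opChain_eq, opChain_eq, filt_succ]
  have h1 : (i.castSucc).succAbove j = j.succ :=
    Fin.succAbove_of_le_castSucc _ _ (Fin.castSucc_le_castSucc_iff.2 hij)
  have h2 : ((List.finRange (n+1)).filter fun k => j < k).map (x ∘ (i.castSucc).succAbove)
      = (((List.finRange (n+1)).filter fun k => j < k).map Fin.succ).map x := by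
    rw [List.map_map]
    apply List.map_congr_left
    intro k hk
    have hk' : j < k := by simpa using (List.mem_filter.1 hk).2
    have : (i.castSucc).succAbove k = k.succ :=
      Fin.succAbove_of_le_castSucc _ _ (Fin.castSucc_le_castSucc_iff.2 ((hij.trans hk'.le)))
    simp [Function.comp, this]
  rw [h2, Function.comp_apply, h1]

private lemma chain_d {n : ℕ} (op : Q → Q → Q) (i j : Fin (n+1)) (hij : i ≤ j)
    (x : Fin (n+2) → Q) :
    opChain op (fun k => if (i.castSucc).succAbove k < i.castSucc
        then op (x ((i.castSucc).succAbove k)) (x i.castSucc)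
        else x ((i.castSucc).succAbove k)) j
      = opChain op x j.succ := by
  have key : ∀ m : Fin (n+1), i ≤ m →
      (if (i.castSucc).succAbove m < i.castSucc
        then op (x ((i.castSucc).succAbove m)) (x i.castSucc)
        else x ((i.castSucc).succAbove m)) = x m.succ := by
    intro m hm
    have hs : (i.castSucc).succAbove m = m.succ :=
      Fin.succAbove_of_le_castSucc _ _ (Fin.castSucc_le_castSucc_iff.2 hm)
    rw [hs, if_neg]
    intro hlt
    simp only [Fin.lt_def, Fin.val_succ, Fin.coe_castSucc, Fin.le_def] at hlt hm
    omega
  rw [opChain_eq, opChain_eq, filt_succ]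
  have h2 : ((List.finRange (n+1)).filter fun k => j < k).map (fun k =>
        if (i.castSucc).succAbove k < i.castSucc
        then op (x ((i.castSucc).succAbove k)) (x i.castSucc)
        else x ((i.castSucc).succAbove k))
      = (((List.finRange (n+1)).filter fun k => j < k).map Fin.succ).map x := by
    rw [List.map_map]
    apply List.map_congr_left
    intro k hk
    have hk' : j < k := by simpa using (List.mem_filter.1 hk).2
    exact key k (hij.trans hk'.le)
  rw [h2, key j hij]


private lemma chain_split {n : ℕ} (op : Q → Q → Q) (i j : Fin (n+1)) (hij : i ≤ j)
    (x : Fin (n+2) → Q) :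
    opChain op x i.castSucc =
      List.foldl op
        (op (List.foldl op (x i.castSucc)
            (((List.finRange (n+1)).filter fun k => decide (i < k) && decide (k ≤ j)).map
              (x ∘ Fin.castSucc)))
          (x j.succ))
        (((List.finRange (n+1)).filter fun k => j < k).map (x ∘ Fin.succ)) := by
  rw [opChain_eq]
  have hpivot := filter_split_pivot (fun k => decide (i.castSucc < k)) j.succ
    (List.finRange (n+2)) (List.pairwise_lt_finRange _) (List.mem_finRange _)
    (by simp [Fin.castSucc_lt_succ_iff, hij])
  have hS1 : ((List.finRange (n+2)).filter fun k =>
        decide (i.castSucc < k) && decide (k < j.succ)) =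
      ((List.finRange (n+1)).filter fun k => decide (i < k) && decide (k ≤ j)).map
        Fin.castSucc := by
    rw [List.finRange_succ_last, List.filter_append, List.filter_map]
    have h0 : ([Fin.last (n+1)].filter fun k =>
        decide (i.castSucc < k) && decide (k < j.succ)) = [] := by
      simp [not_lt.2 (Fin.le_last j.succ)]
    rw [h0, List.append_nil]
    congr 1
    apply List.filter_congr
    intro k _
    simp [Function.comp, Fin.castSucc_lt_castSucc_iff, Fin.castSucc_lt_succ_iff]
  have hS2 : ((List.finRange (n+2)).filter fun k =>
        decide (i.castSucc < k) && decide (j.succ < k)) =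
      ((List.finRange (n+1)).filter fun k => j < k).map Fin.succ := by
    rw [← filt_succ]
    apply List.filter_congr
    intro k _
    by_cases hk : j.succ < k
    · have : i.castSucc < k :=
        lt_of_le_of_lt ((Fin.castSucc_le_castSucc_iff.2 hij).trans (Fin.castSucc_le_succ j)) hk
      simp [hk, this]
    · simp [hk]
  rw [hpivot, hS1, hS2, List.map_append, List.map_cons, List.foldl_append, List.foldl_cons,
    List.map_map, List.map_map]

private lemma chain_k2 {n : ℕ} (op : Q → Q → Q) (j : Fin (n+1)) (x : Fin (n+2) → Q) :
    opChain op x j.succ =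
      List.foldl op (x j.succ)
        (((List.finRange (n+1)).filter fun k => j < k).map (x ∘ Fin.succ)) := by
  rw [opChain_eq, filt_succ, List.map_map]

private lemma chain_b {n : ℕ} {op : Q → Q → Q} (h : IsRack op) (i j : Fin (n+1)) (hij : i ≤ j)
    (x : Fin (n+2) → Q) :
    opChain op x i.castSucc =
      op (opChain op (x ∘ (j.succ).succAbove) i) (opChain op x j.succ) := by
  have hsplit := filter_split_le (fun k => decide (i < k)) j (List.finRange (n+1))
    (List.pairwise_lt_finRange _)
  have hA : opChain op (x ∘ (j.succ).succAbove) i =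
      List.foldl op
        (List.foldl op (x i.castSucc)
          (((List.finRange (n+1)).filter fun k => decide (i < k) && decide (k ≤ j)).map
            (x ∘ Fin.castSucc)))
        (((List.finRange (n+1)).filter fun k => j < k).map (x ∘ Fin.succ)) := by
    have hstart : (x ∘ (j.succ).succAbove) i = x i.castSucc := by
      simp [Function.comp, Fin.succAbove_succ_of_le j i hij]
    have hm1 : (((List.finRange (n+1)).filter fun k => decide (i < k) && decide (k ≤ j)).map
          (x ∘ (j.succ).succAbove)) =
        (((List.finRange (n+1)).filter fun k => decide (i < k) && decide (k ≤ j)).map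
          (x ∘ Fin.castSucc)) := by
      apply List.map_congr_left
      intro k hk
      have hk' : k ≤ j := by
        have := (List.mem_filter.1 hk).2
        simp only [Bool.and_eq_true, decide_eq_true_eq] at this
        exact this.2
      simp [Function.comp, Fin.succAbove_succ_of_le j k hk']
    have hm2 : (((List.finRange (n+1)).filter fun k => decide (i < k) && decide (j < k)).map
          (x ∘ (j.succ).succAbove)) =
        (((List.finRange (n+1)).filter fun k => j < k).map (x ∘ Fin.succ)) := by
      have hf : ((List.finRange (n+1)).filter fun k => decide (i < k) && decide (j < k)) =
          ((List.finRange (n+1)).filter fun k => j < k) := by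
        apply List.filter_congr
        intro k _
        by_cases hk : j < k
        · simp [hk, hij.trans_lt hk]
        · simp [hk]
      rw [hf]
      apply List.map_congr_left
      intro k hk
      have hk' : j < k := by simpa using (List.mem_filter.1 hk).2
      simp [Function.comp, Fin.succAbove_succ_of_lt j k hk']
    rw [opChain_eq, hstart, hsplit, List.map_append, List.foldl_append, hm1, hm2]
  rw [chain_split op i j hij x, foldl_op_op h, ← hA, ← chain_k2]

private lemma chain_c {n : ℕ} {op : Q → Q → Q} (h : IsRack op) (i j : Fin (n+1)) (hij : i ≤ j)
    (x : Fin (n+2) → Q) :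
    opChain op (fun k => if (j.succ).succAbove k < j.succ
        then op (x ((j.succ).succAbove k)) (x j.succ)
        else x ((j.succ).succAbove k)) i
      = opChain op x i.castSucc := by
  have hsplit := filter_split_le (fun k => decide (i < k)) j (List.finRange (n+1))
    (List.pairwise_lt_finRange _)
  set τ : Fin (n+1) → Q := fun k => if (j.succ).succAbove k < j.succ
      then op (x ((j.succ).succAbove k)) (x j.succ)
      else x ((j.succ).succAbove k) with hτ
  have hval1 : ∀ m : Fin (n+1), m ≤ j → τ m = op (x m.castSucc) (x j.succ) := by
    intro m hm
    rw [hτ]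
    simp only []
    rw [Fin.succAbove_succ_of_le j m hm, if_pos (Fin.castSucc_lt_succ_iff.2 hm)]
  have hval2 : ∀ m : Fin (n+1), j < m → τ m = x m.succ := by
    intro m hm
    rw [hτ]
    simp only []
    rw [Fin.succAbove_succ_of_lt j m hm, if_neg (by rw [Fin.succ_lt_succ_iff]; exact not_lt.2 hm.le)]
  have hm1 : (((List.finRange (n+1)).filter fun k => decide (i < k) && decide (k ≤ j)).map τ) =
      ((((List.finRange (n+1)).filter fun k => decide (i < k) && decide (k ≤ j)).map
        (x ∘ Fin.castSucc)).map (fun b => op b (x j.succ))) := by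
    rw [List.map_map]
    apply List.map_congr_left
    intro k hk
    have hk' : k ≤ j := by
      have := (List.mem_filter.1 hk).2
      simp only [Bool.and_eq_true, decide_eq_true_eq] at this
      exact this.2
    simp [hval1 k hk', Function.comp]
  have hm2 : (((List.finRange (n+1)).filter fun k => decide (i < k) && decide (j < k)).map τ) =
      (((List.finRange (n+1)).filter fun k => j < k).map (x ∘ Fin.succ)) := by
    have hf : ((List.finRange (n+1)).filter fun k => decide (i < k) && decide (j < k)) =
        ((List.finRange (n+1)).filter fun k => j < k) := by
      apply List.filter_congr
      intro k _
      by_cases hk : j < k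
      · simp [hk, hij.trans_lt hk]
      · simp [hk]
    rw [hf]
    apply List.map_congr_left
    intro k hk
    have hk' : j < k := by simpa using (List.mem_filter.1 hk).2
    simp [hval2 k hk', Function.comp]
  rw [chain_split op i j hij x, opChain_eq, hsplit, List.map_append, List.foldl_append,
    hm1, hm2, hval1 i hij, foldl_op_right h]

private lemma succAbove_val {N : ℕ} (p : Fin (N+1)) (m : Fin N) :
    ((p.succAbove m : Fin (N+1)) : ℕ) = if (m:ℕ) < (p:ℕ) then (m:ℕ) else (m:ℕ)+1 := by
  rcases lt_or_ge (m.castSucc) p with h'|h'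
  · rw [Fin.succAbove_of_castSucc_lt _ _ h', if_pos (by exact_mod_cast h')]
    rfl
  · rw [Fin.succAbove_of_le_castSucc _ _ h', if_neg (by exact_mod_cast not_lt.2 h')]
    rfl

section funlems
variable {op : Q → Q → Q}

private lemma funA {n : ℕ} (i j : Fin (n+1)) (hij : i ≤ j) (z : Fin (n+2) → Q) :
    (z ∘ i.castSucc.succAbove) ∘ j.succAbove = (z ∘ j.succ.succAbove) ∘ i.succAbove := by
  funext k
  exact congrArg z (succAbove_comm i j hij k)

private lemma funB {n : ℕ} (op : Q → Q → Q) (i j : Fin (n+1)) (hij : i ≤ j) (z : Fin (n+2) → Q) :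
    (fun j_1 => if j.succAbove j_1 < j then
        op (z (i.castSucc.succAbove (j.succAbove j_1))) (z j.succ)
      else z (i.castSucc.succAbove (j.succAbove j_1))) =
    (fun j_1 => if j.succ.succAbove j_1 < j.succ then
        op (z (j.succ.succAbove j_1)) (z j.succ)
      else z (j.succ.succAbove j_1)) ∘ i.succAbove := by
  have hij' : (i:ℕ) ≤ (j:ℕ) := hij
  funext k
  simp only [Function.comp_apply]
  rw [← succAbove_comm i j hij k]
  split_ifs <;>
    first
      | rfl
      | (exfalso
         simp only [Fin.lt_def, succAbove_val, Fin.val_succ, Fin.coe_castSucc] at *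
         split_ifs at * <;> omega)

private lemma funC {n : ℕ} (op : Q → Q → Q) (i j : Fin (n+1)) (hij : i ≤ j) (z : Fin (n+2) → Q) :
    (fun j_1 => if i.castSucc.succAbove j_1 < i.castSucc then
        op (z (i.castSucc.succAbove j_1)) (z i.castSucc)
      else z (i.castSucc.succAbove j_1)) ∘ j.succAbove =
    (fun j_1 => if i.succAbove j_1 < i then
        op (z (j.succ.succAbove (i.succAbove j_1))) (z i.castSucc)
      else z (j.succ.succAbove (i.succAbove j_1))) := by
  have hij' : (i:ℕ) ≤ (j:ℕ) := hij
  funext k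
  simp only [Function.comp_apply]
  rw [succAbove_comm i j hij k]
  split_ifs <;>
    first
      | rfl
      | (exfalso
         simp only [Fin.lt_def, succAbove_val, Fin.val_succ, Fin.coe_castSucc] at *
         split_ifs at * <;> omega)

private lemma funD {n : ℕ} (h : IsRack op) (i j : Fin (n+1)) (hij : i ≤ j) (z : Fin (n+2) → Q) :
    (fun j_1 => if j.succAbove j_1 < j then
        op (if i.castSucc.succAbove (j.succAbove j_1) < i.castSucc then
            op (z (i.castSucc.succAbove (j.succAbove j_1))) (z i.castSucc)
          else z (i.castSucc.succAbove (j.succAbove j_1)))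
          (z j.succ)
      else
        if i.castSucc.succAbove (j.succAbove j_1) < i.castSucc then
          op (z (i.castSucc.succAbove (j.succAbove j_1))) (z i.castSucc)
        else z (i.castSucc.succAbove (j.succAbove j_1))) =
    (fun j_1 => if i.succAbove j_1 < i then
        op (if j.succ.succAbove (i.succAbove j_1) < j.succ then
            op (z (j.succ.succAbove (i.succAbove j_1))) (z j.succ)
          else z (j.succ.succAbove (i.succAbove j_1)))
          (op (z i.castSucc) (z j.succ))
      else
        if j.succ.succAbove (i.succAbove j_1) < j.succ then
          op (z (j.succ.succAbove (i.succAbove j_1))) (z j.succ)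
        else z (j.succ.succAbove (i.succAbove j_1))) := by
  have hij' : (i:ℕ) ≤ (j:ℕ) := hij
  funext k
  rw [← succAbove_comm i j hij k]
  split_ifs <;>
    first
      | rfl
      | exact h.2 _ _ _
      | (exfalso
         simp only [Fin.lt_def, succAbove_val, Fin.val_succ, Fin.coe_castSucc] at *
         split_ifs at * <;> omega)
end funlems

noncomputable section
variable {A : Type*} [CommRing A]

private lemma delta_op {op : Q → Q → Q} (h : IsRack op) (a₁ a₂ c₁ c₂ : Q) :
    (if c₁ = c₂ then (1:A) else 0) * (if op a₁ c₁ = op a₂ c₂ then (1:A) else 0) =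
    (if c₁ = c₂ then (1:A) else 0) * (if a₁ = a₂ then (1:A) else 0) := by
  by_cases hc : c₁ = c₂
  · subst hc
    by_cases ha : a₁ = a₂
    · simp [ha]
    · rw [if_neg ha, if_neg (fun he => ha (rack_inj h he))]
  · simp [hc]

set_option maxHeartbeats 1000000 in
/-- The partial coboundaries satisfy `d_i^{n+1} ∘ d_j^n = d_{j+1}^{n+1} ∘ d_i^n` for `i ≤ j`. -/
theorem dpart_dpart (op : Q → Q → Q) (h : IsRack op) {n : ℕ}
    (i j : Fin (n + 1)) (hij : i ≤ j) (f : (Fin n → Q) → (Fin n → Q) → A) :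
    dpart op i.castSucc (dpart op j f) = dpart op j.succ (dpart op i f) := by
  funext x y
  have hij' : (i:ℕ) ≤ (j:ℕ) := hij
  have hsj : i.castSucc.succAbove j = j.succ :=
    Fin.succAbove_of_le_castSucc _ _ (Fin.castSucc_le_castSucc_iff.2 hij)
  have hsi : j.succ.succAbove i = i.castSucc := Fin.succAbove_succ_of_le j i hij
  have hnot : ¬ j.succ < i.castSucc := by
    simp only [Fin.lt_def, Fin.val_succ, Fin.coe_castSucc, not_lt]
    exact Nat.le_succ_of_le hij
  have hpos : i.castSucc < j.succ := Fin.castSucc_lt_succ_iff.2 hij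
  simp only [dpart, Function.comp_apply, hsj, hsi, if_neg hnot, if_pos hpos]
  rw [funA i j hij x, funA i j hij y, funB op i j hij x, funB op i j hij y,
    funC op i j hij x, funC op i j hij y, funD h i j hij x, funD h i j hij y,
    chain_a op i j hij x, chain_a op i j hij y,
    chain_d op i j hij x, chain_d op i j hij y,
    chain_c h i j hij x, chain_c h i j hij y,
    chain_b h i j hij x, chain_b h i j hij y]
  have h1 := delta_op (A := A) h (opChain op (x ∘ j.succ.succAbove) i)
    (opChain op (y ∘ j.succ.succAbove) i) (opChain op x j.succ) (opChain op y j.succ)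
  have h2 := delta_op (A := A) h (x i.castSucc) (y i.castSucc) (x j.succ) (y j.succ)
  linear_combination (f ((x ∘ j.succ.succAbove) ∘ i.succAbove) ((y ∘ j.succ.succAbove) ∘ i.succAbove)) * h1 -
    (f (fun j_1 => if i.succAbove j_1 < i then
          op (if j.succ.succAbove (i.succAbove j_1) < j.succ then
              op (x (j.succ.succAbove (i.succAbove j_1))) (x j.succ)
            else x (j.succ.succAbove (i.succAbove j_1)))
            (op (x i.castSucc) (x j.succ))
        else
          if j.succ.succAbove (i.succAbove j_1) < j.succ then
            op (x (j.succ.succAbove (i.succAbove j_1))) (x j.succ)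
          else x (j.succ.succAbove (i.succAbove j_1)))
      (fun j_1 => if i.succAbove j_1 < i then
          op (if j.succ.succAbove (i.succAbove j_1) < j.succ then
              op (y (j.succ.succAbove (i.succAbove j_1))) (y j.succ)
            else y (j.succ.succAbove (i.succAbove j_1)))
            (op (y i.castSucc) (y j.succ))
        else
          if j.succ.succAbove (i.succAbove j_1) < j.succ then
            op (y (j.succ.succAbove (i.succAbove j_1))) (y j.succ)
          else y (j.succ.succAbove (i.succAbove j_1)))) * h2

end
end

section
/- Let Q be a rack. The diagonal cochains (those f : Q^n × Q^n → m with f[(x_1,...,x_n),(y_1,...,y_n)] = 0 whenever x_i ≠ y_i for some i) form a subcomplex of the Yang-Baxter cochain complex: if f is diagonal then so is each d_i^n f, hence so is d^n f. -/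
open scoped Classical

variable {Q : Type*}

noncomputable section
variable {A : Type*} [CommRing A]

/-- A matrix is diagonal if its entries vanish whenever `x i ≠ y i` for some `i`. -/
def IsDiag {n : ℕ} (f : (Fin n → Q) → (Fin n → Q) → A) : Prop :=
  ∀ x y : Fin n → Q, (∃ i, x i ≠ y i) → f x y = 0

private lemma foldl_inj (op : Q → Q → Q) (hinj : ∀ c : Q, Function.Injective fun a => op a c)
    {m : ℕ} (x : Fin m → Q) (l : List (Fin m)) :
    Function.Injective fun a => l.foldl (fun a j => op a (x j)) a := by
  induction l with
  | nil => exact fun a b h => h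
  | cons hd tl ih =>
      intro a b hab
      simp only [List.foldl_cons] at hab
      exact hinj (x hd) (ih hab)

/-- Diagonal cochains form a subcomplex: if `f` is diagonal then so is each `d_i^n f`,
hence so is `d^n f`. -/
theorem isDiag_d (op : Q → Q → Q) (h : IsRack op) {n : ℕ}
    (f : (Fin n → Q) → (Fin n → Q) → A) (hf : IsDiag f) :
    (∀ i : Fin (n + 1), IsDiag (dpart op i f)) ∧ IsDiag (dYB op f) := by
  have hinj : ∀ c : Q, Function.Injective fun a => op a c := fun c => (h.1 c).1
  have hpart : ∀ i : Fin (n + 1), IsDiag (dpart op i f) := by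
    rintro i x y ⟨j, hj⟩
    unfold dpart
    by_cases hcase : ∃ k, k ≠ i ∧ x k ≠ y k
    · obtain ⟨k, hki, hk⟩ := hcase
      obtain ⟨k', hk'⟩ := Fin.exists_succAbove_eq hki
      have h1 : f (x ∘ i.succAbove) (y ∘ i.succAbove) = 0 :=
        hf _ _ ⟨k', by simp [Function.comp, hk', hk]⟩
      rw [h1, zero_mul, zero_sub]
      by_cases hxy : x i = y i
      · have h2 : f
            (fun j => if i.succAbove j < i then op (x (i.succAbove j)) (x i)
              else x (i.succAbove j))
            (fun j => if i.succAbove j < i then op (y (i.succAbove j)) (y i)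
              else y (i.succAbove j)) = 0 := by
          apply hf
          refine ⟨k', ?_⟩
          rw [hk']
          split
          · rw [hxy]; exact fun hc => hk (hinj (y i) hc)
          · exact hk
        rw [h2, zero_mul, neg_zero]
      · rw [if_neg hxy, mul_zero, neg_zero]
    · push_neg at hcase
      have hxi : x i ≠ y i := by
        intro hxi
        apply hj
        by_cases hji : j = i
        · rwa [hji]
        · exact hcase j hji
      have hchain : opChain op x i ≠ opChain op y i := by
        unfold opChain
        have hlist : ((List.finRange (n+1)).filter fun j => i < j).foldl
              (fun a j => op a (x j)) (x i)
            = ((List.finRange (n+1)).filter fun j => i < j).foldl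
              (fun a j => op a (y j)) (x i) := by
          apply List.foldl_ext
          intro b j hjmem
          have hij : i < j := by simpa using (List.mem_filter.mp hjmem).2
          rw [hcase j hij.ne']
        rw [hlist]
        intro hc
        exact hxi (foldl_inj op hinj y _ hc)
      rw [if_neg hchain, mul_zero, if_neg hxi, mul_zero, sub_zero]
  refine ⟨hpart, ?_⟩
  intro x y hxy
  unfold dYB
  apply Finset.sum_eq_zero
  intro i _
  rw [hpart i x y hxy, mul_zero]

end
end

section
/- Let Q be a rack. The map r^n sending a Yang-Baxter n-cochain f to its diagonal part (keeping entries with x_i = y_i for all i, setting all others to zero) is a cochain map commuting with the coboundary, restricts to the identity on diagonal cochains, and hence rack cohomology is a direct summand of Yang-Baxter cohomology. -/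
open scoped Classical

variable {Q : Type*}

noncomputable section
variable {A : Type*} [CommRing A]

/-- The projection `r^n` onto the diagonal part of a cochain. -/
def rDiag {n : ℕ} (f : (Fin n → Q) → (Fin n → Q) → A) :
    (Fin n → Q) → (Fin n → Q) → A := fun x y =>
  if ∀ i, x i = y i then f x y else 0

lemma foldl_op_injective (op : Q → Q → Q)
    (h : ∀ y : Q, Function.Bijective fun x => op x y) :
    ∀ l : List Q, Function.Injective fun a => l.foldl op a := by
  intro l
  induction l with
  | nil => exact fun a b hab => hab
  | cons c l ih =>
    intro a b hab
    have h2 : op a c = op b c := ih hab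
    exact (h c).1 h2

lemma diag_of_opChain (op : Q → Q → Q) (h : IsRack op) {n : ℕ}
    {x y : Fin (n + 1) → Q} {i : Fin (n + 1)}
    (hσ : ∀ j : Fin n, x (i.succAbove j) = y (i.succAbove j))
    (hc : opChain op x i = opChain op y i) : x = y := by
  have hne : ∀ j : Fin (n + 1), j ≠ i → x j = y j := by
    intro j hj
    obtain ⟨k, rfl⟩ := Fin.exists_succAbove_eq hj
    exact hσ k
  have hmap : (((List.finRange (n + 1)).filter fun j => i < j).map x) =
      (((List.finRange (n + 1)).filter fun j => i < j).map y) := by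
    apply List.map_congr_left
    intro j hj
    have : i < j := by
      have := List.of_mem_filter hj
      simpa using this
    exact hne j (ne_of_gt this)
  have hchain : ∀ z : Fin (n + 1) → Q, opChain op z i =
      (((List.finRange (n + 1)).filter fun j => i < j).map z).foldl op (z i) := by
    intro z; rw [opChain, List.foldl_map]
  rw [hchain x, hchain y, hmap] at hc
  have hxi : x i = y i :=
    foldl_op_injective op h.1 _ hc
  funext j
  by_cases hj : j = i
  · subst hj; exact hxi
  · exact hne j hj

lemma diag_of_act (op : Q → Q → Q) (h : IsRack op) {n : ℕ}
    {x y : Fin (n + 1) → Q} {i : Fin (n + 1)}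
    (hi : x i = y i)
    (hσ : ∀ j : Fin n,
      (if i.succAbove j < i then op (x (i.succAbove j)) (x i) else x (i.succAbove j)) =
      (if i.succAbove j < i then op (y (i.succAbove j)) (y i) else y (i.succAbove j))) :
    x = y := by
  have hne : ∀ j : Fin (n + 1), j ≠ i → x j = y j := by
    intro j hj
    obtain ⟨k, rfl⟩ := Fin.exists_succAbove_eq hj
    have := hσ k
    by_cases hk : i.succAbove k < i
    · rw [if_pos hk, if_pos hk, ← hi] at this
      exact (h.1 (x i)).1 this
    · rwa [if_neg hk, if_neg hk] at this
  funext j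
  by_cases hj : j = i
  · subst hj; exact hi
  · exact hne j hj

lemma dpart_rDiag (op : Q → Q → Q) (h : IsRack op) {n : ℕ}
    (f : (Fin n → Q) → (Fin n → Q) → A) (i : Fin (n + 1)) :
    dpart op i (rDiag f) = rDiag (dpart op i f) := by
  funext x y
  by_cases hd : ∀ j, x j = y j
  · have hxy : x = y := funext hd
    subst hxy
    simp [dpart, rDiag]
  · rw [rDiag, if_neg hd]
    have hd' : ∃ j, x j ≠ y j := by push_neg at hd; exact hd
    rw [dpart]
    have h1 : rDiag f (x ∘ i.succAbove) (y ∘ i.succAbove) *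
        (if opChain op x i = opChain op y i then (1 : A) else 0) = 0 := by
      by_cases hσ : ∀ j : Fin n, (x ∘ i.succAbove) j = (y ∘ i.succAbove) j
      · by_cases hc : opChain op x i = opChain op y i
        · exact absurd (diag_of_opChain op h hσ hc) (by
            obtain ⟨j, hj⟩ := hd'
            intro he; exact hj (congrFun he j))
        · rw [if_neg hc, mul_zero]
      · rw [rDiag, if_neg hσ, zero_mul]
    have h2 : rDiag f
        (fun j => if i.succAbove j < i then op (x (i.succAbove j)) (x i) else x (i.succAbove j))
        (fun j => if i.succAbove j < i then op (y (i.succAbove j)) (y i) else y (i.succAbove j)) *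
        (if x i = y i then (1 : A) else 0) = 0 := by
      by_cases hi : x i = y i
      · by_cases hσ : ∀ j : Fin n,
            (if i.succAbove j < i then op (x (i.succAbove j)) (x i) else x (i.succAbove j)) =
            (if i.succAbove j < i then op (y (i.succAbove j)) (y i) else y (i.succAbove j))
        · exact absurd (diag_of_act op h hi hσ) (by
            obtain ⟨j, hj⟩ := hd'
            intro he; exact hj (congrFun he j))
        · rw [rDiag, if_neg hσ, zero_mul]
      · rw [if_neg hi, mul_zero]
    rw [h1, h2, sub_zero]

/-- The diagonal projection is a cochain retraction: it commutes with each partial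
coboundary `d_i^n` and with `d^n`, its image is diagonal, and it restricts to the
identity on diagonal cochains; hence rack cohomology (the diagonal subcomplex) is a
direct summand of Yang-Baxter cohomology. -/
theorem rDiag_retraction (op : Q → Q → Q) (h : IsRack op) {n : ℕ}
    (f : (Fin n → Q) → (Fin n → Q) → A) :
    (∀ i : Fin (n + 1), dpart op i (rDiag f) = rDiag (dpart op i f)) ∧
      dYB op (rDiag f) = rDiag (dYB op f) ∧
      IsDiag (rDiag f) ∧
      (IsDiag f → rDiag f = f) := by
  have hcomm := fun i => dpart_rDiag op h f i
  refine ⟨hcomm, ?_, ?_, ?_⟩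
  · funext x y
    rw [dYB]
    by_cases hd : ∀ j, x j = y j
    · have hxy : x = y := funext hd
      subst hxy
      rw [rDiag, if_pos (fun _ => rfl), dYB]
      exact Finset.sum_congr rfl fun i _ => by rw [hcomm i, rDiag, if_pos (fun _ => rfl)]
    · rw [rDiag, if_neg hd]
      refine Finset.sum_eq_zero fun i _ => ?_
      rw [hcomm i, rDiag, if_neg hd, mul_zero]
  · intro x y hxy
    rw [rDiag, if_neg (by obtain ⟨i, hi⟩ := hxy; intro he; exact hi (he i))]
  · intro hf
    funext x y
    rw [rDiag]
    by_cases hd : ∀ j, x j = y j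
    · rw [if_pos hd]
    · rw [if_neg hd, eq_comm]
      exact hf x y (by push_neg at hd; exact hd)

end
end

section
/- Let Q be a rack. The quasi-diagonal cochains (those f : Q^n × Q^n → m with f[(x_1,...,x_n),(y_1,...,y_n)] = 0 whenever x_i ≢ y_i for some i, where ≡ is behavioural equivalence) form a subcomplex of the Yang-Baxter cochain complex. -/
open scoped Classical

variable {Q : Type*}

noncomputable section
variable {A : Type*} [CommRing A]

/-- A matrix is quasi-diagonal if its entries vanish whenever `x i ≢ y i` for some `i`
(with `≡` behavioural equivalence). -/
def IsQDiag (op : Q → Q → Q) {n : ℕ} (f : (Fin n → Q) → (Fin n → Q) → A) : Prop :=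
  ∀ x y : Fin n → Q, (∃ i, ¬ behEq op (x i) (y i)) → f x y = 0

lemma behEq_of_op {op : Q → Q → Q} (h : IsRack op) {u v c : Q}
    (huv : behEq op (op u c) (op v c)) : behEq op u v := by
  intro a
  apply (h.1 c).1
  show op (op a u) c = op (op a v) c
  rw [h.2 a u c, h.2 a v c]
  exact huv (op a c)

lemma behEq_refl (op : Q → Q → Q) (z : Q) : behEq op z z := fun _ => rfl

lemma ne_of_not_behEq {op : Q → Q → Q} {u v : Q} (h : ¬ behEq op u v) : u ≠ v := by
  rintro rfl; exact h (behEq_refl op u)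

lemma not_behEq_foldl {op : Q → Q → Q} (h : IsRack op) {n : ℕ} {x y : Fin (n+1) → Q}
    (l : List (Fin (n+1))) (hl : ∀ j ∈ l, behEq op (x j) (y j)) :
    ∀ u v, ¬ behEq op u v →
      ¬ behEq op (l.foldl (fun a j => op a (x j)) u) (l.foldl (fun a j => op a (y j)) v) := by
  induction l with
  | nil => intro u v h'; exact h'
  | cons j t ih =>
    intro u v h'
    simp only [List.foldl_cons]
    have hvy : op v (y j) = op v (x j) := (hl j List.mem_cons_self v).symm
    rw [hvy]
    exact ih (fun k hk => hl k (List.mem_cons_of_mem _ hk)) _ _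
      (fun hc => h' (behEq_of_op h hc))

/-- Quasi-diagonal cochains form a subcomplex of the Yang-Baxter cochain complex. -/
theorem isQDiag_d (op : Q → Q → Q) (h : IsRack op) {n : ℕ}
    (f : (Fin n → Q) → (Fin n → Q) → A) (hf : IsQDiag op f) :
    (∀ i : Fin (n + 1), IsQDiag op (dpart op i f)) ∧ IsQDiag op (dYB op f) := by
  have key : ∀ i : Fin (n+1), IsQDiag op (dpart op i f) := by
    rintro i x y ⟨j, hj⟩
    unfold dpart
    by_cases hc : ∃ k : Fin n, ¬ behEq op (x (i.succAbove k)) (y (i.succAbove k))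
    · obtain ⟨k, hk⟩ := hc
      rw [hf _ _ ⟨k, hk⟩]
      by_cases hxy : x i = y i
      · rw [hf _ _ ?_]
        · ring
        · refine ⟨k, ?_⟩
          by_cases hlt : i.succAbove k < i
          · simp only [if_pos hlt]
            rw [← hxy]
            exact fun hb => hk (behEq_of_op h hb)
          · simp only [if_neg hlt]; exact hk
      · rw [if_neg hxy]; ring
    · push_neg at hc
      have hji : j = i := by
        by_contra hne
        obtain ⟨k, hk⟩ := Fin.exists_succAbove_eq hne
        exact hj (hk ▸ hc k)
      subst hji
      have hne : x j ≠ y j := ne_of_not_behEq hj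
      rw [if_neg hne]
      have hchain : opChain op x j ≠ opChain op y j := by
        apply ne_of_not_behEq
        unfold opChain
        refine not_behEq_foldl h _ (fun m hm => ?_) _ _ hj
        have hlt : j < m := by simpa using (List.mem_filter.mp hm).2
        obtain ⟨k, hk⟩ := Fin.exists_succAbove_eq hlt.ne'
        exact hk ▸ hc k
      rw [if_neg hchain]; ring
  refine ⟨key, ?_⟩
  intro x y hxy
  unfold dYB
  refine Finset.sum_eq_zero fun i _ => ?_
  rw [key i x y hxy, mul_zero]

end
end

section
/- For each m ∈ ℕ, the cochains that are quasi-diagonal in the last m variables, i.e. C_m^n = { f : Q^n × Q^n → m : f[(x_1..x_n),(y_1..y_n)] = 0 whenever x_i ≢ y_i for some i with n − m < i ≤ n }, form a subcomplex of the Yang-Baxter cochain complex: d^n(C_m^n) ⊆ C_m^{n+1}. Moreover C_m^n = C_n^n for all m > n. -/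
open scoped Classical

variable {Q : Type*}

noncomputable section
variable {A : Type*} [CommRing A]

/-- Membership in `C_m^n`: the cochain is quasi-diagonal in the last `m` variables,
i.e. its entries vanish whenever `x i ≢ y i` for some (0-based) index `i ≥ n - m`. -/
def CmMem (op : Q → Q → Q) (m : ℕ) {n : ℕ}
    (f : (Fin n → Q) → (Fin n → Q) → A) : Prop :=
  ∀ x y : Fin n → Q, (∃ i : Fin n, n - m ≤ (i : ℕ) ∧ ¬ behEq op (x i) (y i)) → f x y = 0

lemma behEq_ne {op : Q → Q → Q} {a b : Q} (h : ¬ behEq op a b) : a ≠ b := by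
  rintro rfl; exact h fun _ => rfl

lemma behEq_op {op : Q → Q → Q} (h : IsRack op) {a b : Q} (c : Q)
    (hab : ¬ behEq op a b) : ¬ behEq op (op a c) (op b c) := by
  intro H; apply hab; intro d
  have h1 := H (op d c)
  rw [← h.2 d a c, ← h.2 d b c] at h1
  exact (h.1 c).injective h1

lemma succAbove_coe {n : ℕ} (i : Fin (n+1)) (j : Fin n) :
    (j : ℕ) ≤ (i.succAbove j : ℕ) ∧ (i.succAbove j : ℕ) ≤ (j : ℕ) + 1 := by
  unfold Fin.succAbove
  split <;> simp

lemma foldl_behEq {op : Q → Q → Q} {N : ℕ} {x y : Fin N → Q}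
    (L : List (Fin N)) (H : ∀ j ∈ L, behEq op (x j) (y j)) (b : Q) :
    L.foldl (fun a j => op a (x j)) b = L.foldl (fun a j => op a (y j)) b := by
  induction L generalizing b with
  | nil => rfl
  | cons hd tl ih =>
    simp only [List.foldl_cons]
    rw [H hd List.mem_cons_self]
    exact ih (fun j hj => H j (List.mem_cons_of_mem _ hj)) _

lemma foldl_inj_s14 {op : Q → Q → Q} (h : IsRack op) {N : ℕ} (x : Fin N → Q)
    (L : List (Fin N)) {a b : Q}
    (hab : L.foldl (fun a j => op a (x j)) a = L.foldl (fun a j => op a (x j)) b) :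
    a = b := by
  induction L generalizing a b with
  | nil => exact hab
  | cons hd tl ih =>
    simp only [List.foldl_cons] at hab
    exact (h.1 (x hd)).injective (ih hab)

/-- `C_m^*` is a subcomplex: `d^n (C_m^n) ⊆ C_m^{n+1}`; moreover the filtration
stabilizes: `C_{m'}^n = C_n^n` for all `m' > n`. -/
theorem CmMem_d (op : Q → Q → Q) (h : IsRack op) (m : ℕ) {n : ℕ}
    (f : (Fin n → Q) → (Fin n → Q) → A) (hf : CmMem op m f) :
    CmMem op m (dYB op f) ∧
      ∀ m' : ℕ, n < m' → ∀ g : (Fin n → Q) → (Fin n → Q) → A,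
        (CmMem op m' g ↔ CmMem op n g) := by
  constructor
  · rintro x y ⟨k, hk, hbk⟩
    have hxyk : x k ≠ y k := behEq_ne hbk
    unfold dYB
    apply Finset.sum_eq_zero
    intro i _
    suffices hd : dpart op i f x y = 0 by rw [hd, mul_zero]
    unfold dpart
    by_cases hik : i = k
    · subst hik
      rw [if_neg hxyk, mul_zero, sub_zero]
      by_cases hch : opChain op x i = opChain op y i
      · rw [if_pos hch, mul_one]
        by_cases hw : ∃ j : Fin n, n - m ≤ (j : ℕ) ∧
            ¬ behEq op ((x ∘ i.succAbove) j) ((y ∘ i.succAbove) j)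
        · exact hf _ _ hw
        · exfalso
          push_neg at hw
          have hall : ∀ l ∈ (List.finRange (n+1)).filter (fun j => i < j),
              behEq op (x l) (y l) := by
            intro l hl
            have hil : i < l := by simpa using (List.mem_filter.mp hl).2
            obtain ⟨j, hj⟩ := Fin.exists_succAbove_eq hil.ne'
            have hc := succAbove_coe i j
            rw [hj] at hc
            have hil' : (i : ℕ) < (l : ℕ) := hil
            have hnm : n - m ≤ (j : ℕ) := by omega
            have := hw j hnm
            simpa [Function.comp, hj] using this
          have h2 : ((List.finRange (n+1)).filter (fun j => i < j)).foldl
                (fun a j => op a (x j)) (x i) =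
              ((List.finRange (n+1)).filter (fun j => i < j)).foldl
                (fun a j => op a (x j)) (y i) := by
            have h1 := foldl_behEq (op := op) (x := y) (y := x)
              ((List.finRange (n+1)).filter (fun j => i < j))
              (fun j hj a => (hall j hj a).symm) (y i)
            exact hch.trans h1
          exact hxyk (foldl_inj_s14 h x _ h2)
      · rw [if_neg hch, mul_zero]
    · obtain ⟨j, hj⟩ := Fin.exists_succAbove_eq (Ne.symm hik)
      have hc := succAbove_coe i j
      rw [hj] at hc
      have hnm : n - m ≤ (j : ℕ) := by omega
      have h1 : f (x ∘ i.succAbove) (y ∘ i.succAbove) = 0 :=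
        hf _ _ ⟨j, hnm, by simpa [Function.comp, hj] using hbk⟩
      rw [h1, zero_mul, zero_sub, neg_eq_zero]
      by_cases hxy : x i = y i
      · rw [if_pos hxy, mul_one]
        apply hf
        refine ⟨j, hnm, ?_⟩
        simp only [hj]
        by_cases hki : k < i
        · rw [if_pos hki, if_pos hki, ← hxy]
          exact behEq_op h (x i) hbk
        · rw [if_neg hki, if_neg hki]; exact hbk
      · rw [if_neg hxy, mul_zero]
  · intro m' hm' g
    constructor <;>
      · rintro hg x y ⟨i, hi, hbi⟩
        exact hg x y ⟨i, by omega, hbi⟩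

end
end
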